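/- Let λ > 1 and 0 < ξ < π(λ+1)/2, let n be an integer with 1 ≤ n < λ, and assume the three sets A := {ξ/λ − π/2 + jπ/(2λ) : j = −(n−1), −(n−3), …, n−1}, B := {−ξ/λ + π/2 + jπ/(2λ) : j = −(n−1), −(n−3), …, n−1}, C := {ξ/λ + π/2 + jπ/(2λ) : j = −(n−1), −(n−3), …, n−1} are pairwise disjoint. Then in the strip 0 < Re u < π/2 the meromorphic function R_1^{(n)}(u) has simple poles exactly at the points of A lying in the strip, simple zeroes exactly at the points of B ∪ C lying in the strip, and no other zeroes or poles in the strip. -/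

import Mathlib

open Complex Real Filter Topology

/-- For a real parameter `y`, the trigonometric block
`(y)_u := sin((u+πy)/2)/sin((u−πy)/2)`. -/
noncomputable def blk (y : ℝ) (u : ℂ) : ℂ :=
  Complex.sin ((u + (Real.pi * y : ℝ)) / 2) / Complex.sin ((u - (Real.pi * y : ℝ)) / 2)

/-- The boundary-parameter-dependent factor `R_1^{(n)}(u)` of the ground-state
reflection amplitude of the `n`-th breather: the product over
`l ∈ {(1−n)/2, (3−n)/2, …, (n−1)/2}` (here `l = (2t+1−n)/2`, `t = 0, …, n−1`) of
`(ξ/(λπ) − 1/2 + l/λ)_u / (ξ/(λπ) + 1/2 + l/λ)_u`. -/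
noncomputable def R1brn (lam ξ : ℝ) (n : ℕ) (u : ℂ) : ℂ :=
  ∏ t ∈ Finset.range n,
    blk (ξ / (lam * Real.pi) - 1 / 2 + (2 * (t : ℝ) + 1 - (n : ℝ)) / (2 * lam)) u /
    blk (ξ / (lam * Real.pi) + 1 / 2 + (2 * (t : ℝ) + 1 - (n : ℝ)) / (2 * lam)) u

/-- The pole set `A = {ξ/λ − π/2 + jπ/(2λ)}` with `j` running over
`−(n−1), −(n−3), …, n−1`. -/
def setA (lam ξ : ℝ) (n : ℕ) : Set ℝ :=
  {x : ℝ | ∃ j : ℤ, |j| ≤ (n : ℤ) - 1 ∧ j ≡ (n : ℤ) - 1 [ZMOD 2] ∧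
    x = ξ / lam - Real.pi / 2 + (j : ℝ) * Real.pi / (2 * lam)}

/-- The zero set `B = {−ξ/λ + π/2 + jπ/(2λ)}`, `j = −(n−1), −(n−3), …, n−1`. -/
def setB (lam ξ : ℝ) (n : ℕ) : Set ℝ :=
  {x : ℝ | ∃ j : ℤ, |j| ≤ (n : ℤ) - 1 ∧ j ≡ (n : ℤ) - 1 [ZMOD 2] ∧
    x = -(ξ / lam) + Real.pi / 2 + (j : ℝ) * Real.pi / (2 * lam)}

/-- The zero set `C = {ξ/λ + π/2 + jπ/(2λ)}`, `j = −(n−1), −(n−3), …, n−1`. -/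
def setC (lam ξ : ℝ) (n : ℕ) : Set ℝ :=
  {x : ℝ | ∃ j : ℤ, |j| ≤ (n : ℤ) - 1 ∧ j ≡ (n : ℤ) - 1 [ZMOD 2] ∧
    x = ξ / lam + Real.pi / 2 + (j : ℝ) * Real.pi / (2 * lam)}

/-- `f` has a pole of order `m` at `p`. -/
def HasPoleOfOrder (f : ℂ → ℂ) (p : ℂ) (m : ℕ) : Prop :=
  ∃ h : ℂ → ℂ, AnalyticAt ℂ h p ∧ h p ≠ 0 ∧
    ∀ᶠ u in 𝓝[≠] p, f u = h u / (u - p) ^ m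

/-- `f` has a zero of order `m` at `p`. -/
def HasZeroOfOrder (f : ℂ → ℂ) (p : ℂ) (m : ℕ) : Prop :=
  ∃ h : ℂ → ℂ, AnalyticAt ℂ h p ∧ h p ≠ 0 ∧
    ∀ᶠ u in 𝓝 p, f u = (u - p) ^ m * h u

/-! ### Auxiliary machinery -/

/-- The basic shifted sine block. -/
noncomputable def SS (c : ℝ) (u : ℂ) : ℂ := Complex.sin ((u - (c:ℂ))/2)

lemma SS_analytic (c : ℝ) (u : ℂ) : AnalyticAt ℂ (SS c) u :=
  (Complex.differentiable_sin.comp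
    ((differentiable_id.sub_const _).div_const _)).analyticAt u

lemma SS_eq_zero_iff (c : ℝ) (u : ℂ) :
    SS c u = 0 ↔ ∃ k : ℤ, u = (c:ℂ) + 2*(Real.pi:ℂ)*k := by
  rw [SS, Complex.sin_eq_zero_iff]
  constructor
  · rintro ⟨k, hk⟩
    refine ⟨k, ?_⟩
    have h2 : u - (c:ℂ) = 2 * ((k:ℂ) * (Real.pi:ℂ)) := by
      field_simp at hk; linear_combination hk
    linear_combination h2
  · rintro ⟨k, hk⟩; exact ⟨k, by rw [hk]; ring⟩

/-- Zeros of `SS c` in the strip: if `-3π/2 < c < 2π` the only candidate is `u = c`. -/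
lemma SS_zero_strip {c : ℝ} {u : ℂ} (hu1 : 0 < u.re) (hu2 : u.re < Real.pi/2)
    (hc1 : -(3*Real.pi/2) < c) (hc2 : c < 2*Real.pi) (h : SS c u = 0) :
    u = (c:ℂ) ∧ 0 < c ∧ c < Real.pi/2 := by
  obtain ⟨k, hk⟩ := (SS_eq_zero_iff c u).mp h
  have hx : u = ((c + 2*Real.pi*k : ℝ) : ℂ) := by rw [hk]; push_cast; ring
  have hre : u.re = c + 2*Real.pi*k := by rw [hx, Complex.ofReal_re]
  have hpi := Real.pi_pos
  have hk0 : k = 0 := by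
    have h1 : 0 < c + 2*Real.pi*k := hre ▸ hu1
    have h2 : c + 2*Real.pi*k < Real.pi/2 := hre ▸ hu2
    have hb1 : -(2*Real.pi) < 2*Real.pi*k := by linarith
    have hb2 : 2*Real.pi*k < 2*Real.pi := by linarith
    have hk1 : (-1 : ℝ) < (k:ℝ) := by nlinarith
    have hk2 : (k:ℝ) < 1 := by nlinarith
    have hk1' : (-1 : ℤ) < k := by exact_mod_cast hk1
    have hk2' : k < 1 := by exact_mod_cast hk2
    omega
  subst hk0
  have hre' : u.re = c := by simpa using hre
  exact ⟨by rw [hx]; push_cast; ring, hre' ▸ hu1, hre' ▸ hu2⟩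

/-- Simple-zero factorization from nonvanishing derivative. -/
lemma simple_zero {f : ℂ → ℂ} {p : ℂ} (hf : AnalyticAt ℂ f p) (h0 : f p = 0)
    (h1 : deriv f p ≠ 0) :
    ∃ g : ℂ → ℂ, AnalyticAt ℂ g p ∧ g p ≠ 0 ∧ ∀ u, f u = (u - p) * g u := by
  refine ⟨dslope f p, ?_, ?_, ?_⟩
  · obtain ⟨q, hq⟩ := hf
    exact ⟨q.fslope, hq.has_fpower_series_dslope_fslope⟩
  · rwa [dslope_same]
  · intro u
    rcases eq_or_ne u p with rfl | hu
    · simp [h0]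
    · rw [dslope_of_ne _ hu]
      simp only [slope, h0, vsub_eq_sub, sub_zero, smul_eq_mul]
      rw [mul_comm ((u - p)⁻¹), ← mul_assoc, mul_comm (u - p),
        mul_assoc, mul_inv_cancel₀ (sub_ne_zero.mpr hu), mul_one]

lemma SS_deriv (c : ℝ) : deriv (SS c) (c:ℂ) = 1/2 := by
  have h : HasDerivAt (SS c) (Complex.cos (((c:ℂ) - c)/2) * (1/2)) (c:ℂ) := by
    have h2 : HasDerivAt (fun u : ℂ => (u - (c:ℂ))/2) (1/2) (c:ℂ) := by
      simpa using ((hasDerivAt_id (c:ℂ)).sub_const (c:ℂ)).div_const 2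
    exact (Complex.hasDerivAt_sin _).comp _ h2
  simpa using h.deriv

lemma SS_factor (c : ℝ) :
    ∃ g : ℂ → ℂ, AnalyticAt ℂ g (c:ℂ) ∧ g (c:ℂ) ≠ 0 ∧
      ∀ u, SS c u = (u - (c:ℂ)) * g u := by
  apply simple_zero (SS_analytic c c)
  · simp [SS]
  · rw [SS_deriv]; norm_num

/-- Pole points of the numerator blocks. -/
noncomputable def cA (lam ξ : ℝ) (n t : ℕ) : ℝ :=
  ξ/lam - Real.pi/2 + (2*(t:ℝ)+1-(n:ℝ))*Real.pi/(2*lam)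

/-- Pole points of the denominator blocks (zeros of the factor). -/
noncomputable def cC (lam ξ : ℝ) (n t : ℕ) : ℝ :=
  ξ/lam + Real.pi/2 + (2*(t:ℝ)+1-(n:ℝ))*Real.pi/(2*lam)

lemma blk_eq (y : ℝ) (u : ℂ) : blk y u = SS (-(Real.pi*y)) u / SS (Real.pi*y) u := by
  unfold blk SS
  push_cast
  ring_nf

lemma div_div_div_eq' (a b c d : ℂ) : (a/b)/(c/d) = a*d/(b*c) := by
  rw [div_div_div_comm, div_div_eq_mul_div, div_mul_eq_mul_div, div_div, mul_comm c b]

lemma R1_eq (lam ξ : ℝ) (hlam : 0 < lam) (n : ℕ) (u : ℂ) :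
    R1brn lam ξ n u = ∏ t ∈ Finset.range n,
      (SS (-(cA lam ξ n t)) u * SS (cC lam ξ n t) u) /
      (SS (cA lam ξ n t) u * SS (-(cC lam ξ n t)) u) := by
  unfold R1brn
  apply Finset.prod_congr rfl
  intro t _
  have hpi := Real.pi_ne_zero
  have e1 : Real.pi * (ξ / (lam * Real.pi) - 1 / 2 + (2 * (t : ℝ) + 1 - (n : ℝ)) / (2 * lam))
      = cA lam ξ n t := by unfold cA; field_simp
  have e2 : Real.pi * (ξ / (lam * Real.pi) + 1 / 2 + (2 * (t : ℝ) + 1 - (n : ℝ)) / (2 * lam))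
      = cC lam ξ n t := by unfold cC; field_simp
  rw [blk_eq, blk_eq, e1, e2, div_div_div_eq']

section Bounds
variable {lam ξ : ℝ} {n t : ℕ}

lemma cA_mem (ht : t < n) : cA lam ξ n t ∈ setA lam ξ n := by
  refine ⟨2*(t:ℤ)+1-n, by rw [abs_le]; omega, ?_, ?_⟩
  · simp only [Int.ModEq]; omega
  · unfold cA; push_cast; ring

lemma neg_cA_mem (ht : t < n) : -(cA lam ξ n t) ∈ setB lam ξ n := by
  refine ⟨-(2*(t:ℤ)+1-n), by rw [abs_le]; omega, ?_, ?_⟩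
  · simp only [Int.ModEq]; omega
  · unfold cA; push_cast; ring

lemma cC_mem (ht : t < n) : cC lam ξ n t ∈ setC lam ξ n := by
  refine ⟨2*(t:ℤ)+1-n, by rw [abs_le]; omega, ?_, ?_⟩
  · simp only [Int.ModEq]; omega
  · unfold cC; push_cast; ring

lemma mem_cA {a : ℝ} (ha : a ∈ setA lam ξ n) : ∃ t < n, a = cA lam ξ n t := by
  obtain ⟨j, hj1, hj2, hj3⟩ := ha
  rw [abs_le] at hj1
  simp only [Int.ModEq] at hj2
  obtain ⟨t, ht, hjt⟩ : ∃ t : ℕ, t < n ∧ (2*(t:ℤ)+1-n) = j := by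
    refine ⟨((j + n - 1)/2).toNat, by omega, by omega⟩
  refine ⟨t, ht, ?_⟩
  rw [hj3]
  unfold cA
  have hjr : 2*(t:ℝ)+1-(n:ℝ) = (j:ℝ) := by exact_mod_cast hjt
  rw [hjr]

lemma mem_cB {b : ℝ} (hb : b ∈ setB lam ξ n) : ∃ t < n, b = -(cA lam ξ n t) := by
  obtain ⟨j, hj1, hj2, hj3⟩ := hb
  rw [abs_le] at hj1
  simp only [Int.ModEq] at hj2
  obtain ⟨t, ht, hjt⟩ : ∃ t : ℕ, t < n ∧ (2*(t:ℤ)+1-n) = -j := by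
    refine ⟨((-j + n - 1)/2).toNat, by omega, by omega⟩
  refine ⟨t, ht, ?_⟩
  rw [hj3]
  unfold cA
  have hjr : 2*(t:ℝ)+1-(n:ℝ) = -(j:ℝ) := by exact_mod_cast hjt
  rw [hjr]
  ring

lemma mem_cC {c : ℝ} (hc : c ∈ setC lam ξ n) : ∃ t < n, c = cC lam ξ n t := by
  obtain ⟨j, hj1, hj2, hj3⟩ := hc
  rw [abs_le] at hj1
  simp only [Int.ModEq] at hj2
  obtain ⟨t, ht, hjt⟩ : ∃ t : ℕ, t < n ∧ (2*(t:ℤ)+1-n) = j := by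
    refine ⟨((j + n - 1)/2).toNat, by omega, by omega⟩
  refine ⟨t, ht, ?_⟩
  rw [hj3]
  unfold cC
  have hjr : 2*(t:ℝ)+1-(n:ℝ) = (j:ℝ) := by exact_mod_cast hjt
  rw [hjr]

lemma cA_inj (hlam : 0 < lam) {t' : ℕ} (h : cA lam ξ n t = cA lam ξ n t') : t = t' := by
  unfold cA at h
  have hpi := Real.pi_pos
  have hW : (0:ℝ) < Real.pi/(2*lam) := by positivity
  rw [mul_div_assoc, mul_div_assoc] at h
  have h2 : (2*(t:ℝ)+1-(n:ℝ))*(Real.pi/(2*lam)) = (2*(t':ℝ)+1-(n:ℝ))*(Real.pi/(2*lam)) := by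
    linarith
  have h3 := mul_right_cancel₀ hW.ne' h2
  have : (t:ℝ) = (t':ℝ) := by linarith
  exact_mod_cast this

lemma cC_inj (hlam : 0 < lam) {t' : ℕ} (h : cC lam ξ n t = cC lam ξ n t') : t = t' := by
  unfold cC at h
  have hpi := Real.pi_pos
  have hW : (0:ℝ) < Real.pi/(2*lam) := by positivity
  rw [mul_div_assoc, mul_div_assoc] at h
  have h2 : (2*(t:ℝ)+1-(n:ℝ))*(Real.pi/(2*lam)) = (2*(t':ℝ)+1-(n:ℝ))*(Real.pi/(2*lam)) := by
    linarith
  have h3 := mul_right_cancel₀ hW.ne' h2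
  have : (t:ℝ) = (t':ℝ) := by linarith
  exact_mod_cast this

lemma base_facts (hlam : 1 < lam) (hxi0 : 0 < ξ) (hxi1 : ξ < Real.pi * (lam + 1) / 2)
    (hn2 : (n : ℝ) < lam) (ht : t < n) :
    (-Real.pi < cA lam ξ n t ∧ cA lam ξ n t < Real.pi) ∧
    (0 < cC lam ξ n t ∧ cC lam ξ n t < 3*Real.pi/2) := by
  have hpi := Real.pi_pos
  have hl0 : (0:ℝ) < lam := by linarith
  have hW : 0 < Real.pi/(2*lam) := by positivity
  have he0 : 0 < ξ/lam := div_pos hxi0 hl0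
  have he1 : ξ/lam < Real.pi/2 + Real.pi/(2*lam) := by
    rw [div_lt_iff₀ hl0]
    have : (Real.pi/2 + Real.pi/(2*lam)) * lam = Real.pi * (lam+1)/2 := by
      field_simp
    rw [this]; exact hxi1
  have hq1 : -((n:ℝ)-1) ≤ 2*(t:ℝ)+1-(n:ℝ) := by
    have : (0:ℝ) ≤ (t:ℝ) := Nat.cast_nonneg t
    linarith
  have hq2 : 2*(t:ℝ)+1-(n:ℝ) ≤ (n:ℝ)-1 := by
    have : (t:ℝ) + 1 ≤ (n:ℝ) := by exact_mod_cast ht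
    linarith
  have hnW : (n:ℝ) * (Real.pi/(2*lam)) < Real.pi/2 := by
    rw [← mul_div_assoc, div_lt_iff₀ (by positivity : (0:ℝ) < 2*lam)]
    nlinarith [mul_pos hpi (sub_pos.mpr hn2)]
  have hrl : -(((n:ℝ)-1) * (Real.pi/(2*lam))) ≤ (2*(t:ℝ)+1-(n:ℝ))*(Real.pi/(2*lam)) := by
    nlinarith
  have hru : (2*(t:ℝ)+1-(n:ℝ))*(Real.pi/(2*lam)) ≤ ((n:ℝ)-1) * (Real.pi/(2*lam)) := by
    nlinarith
  have key : ((n:ℝ)-1) * (Real.pi/(2*lam)) < Real.pi/2 - Real.pi/(2*lam) := by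
    nlinarith
  have hterm : (2*(t:ℝ)+1-(n:ℝ))*Real.pi/(2*lam) = (2*(t:ℝ)+1-(n:ℝ))*(Real.pi/(2*lam)) :=
    mul_div_assoc _ _ _
  constructor
  · unfold cA; rw [hterm]; constructor <;> nlinarith
  · unfold cC; rw [hterm]; constructor <;> nlinarith

end Bounds

/-- One factor of the product. -/
noncomputable def PP (lam ξ : ℝ) (n t : ℕ) (u : ℂ) : ℂ :=
  (SS (-(cA lam ξ n t)) u * SS (cC lam ξ n t) u) /
  (SS (cA lam ξ n t) u * SS (-(cC lam ξ n t)) u)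

lemma R1_eq' (lam ξ : ℝ) (hlam : 0 < lam) (n : ℕ) (u : ℂ) :
    R1brn lam ξ n u = ∏ t ∈ Finset.range n, PP lam ξ n t u := R1_eq lam ξ hlam n u

/-- For `λ > 1`, `0 < ξ < π(λ+1)/2`, `1 ≤ n < λ`, and `A`, `B`, `C` pairwise disjoint,
in the strip `0 < Re u < π/2` the function `R_1^{(n)}` has simple poles exactly at the
points of `A` in the strip, simple zeroes exactly at the points of `B ∪ C` in the strip,
and no other zeroes or poles in the strip. -/
theorem stmt17 (lam ξ : ℝ) (hlam : 1 < lam) (hxi0 : 0 < ξ)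
    (hxi1 : ξ < Real.pi * (lam + 1) / 2) (n : ℕ) (hn1 : 1 ≤ n) (hn2 : (n : ℝ) < lam)
    (hAB : Disjoint (setA lam ξ n) (setB lam ξ n))
    (hAC : Disjoint (setA lam ξ n) (setC lam ξ n))
    (hBC : Disjoint (setB lam ξ n) (setC lam ξ n)) :
    (∀ u : ℂ, 0 < u.re → u.re < Real.pi / 2 →
        (∀ a ∈ setA lam ξ n, u ≠ (a : ℂ)) →
        AnalyticAt ℂ (R1brn lam ξ n) u) ∧
    (∀ a ∈ setA lam ξ n, 0 < a → a < Real.pi / 2 →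
        HasPoleOfOrder (R1brn lam ξ n) ((a : ℝ) : ℂ) 1) ∧
    (∀ b ∈ setB lam ξ n ∪ setC lam ξ n, 0 < b → b < Real.pi / 2 →
        HasZeroOfOrder (R1brn lam ξ n) ((b : ℝ) : ℂ) 1) ∧
    (∀ u : ℂ, 0 < u.re → u.re < Real.pi / 2 →
        (∀ a ∈ setA lam ξ n, u ≠ (a : ℂ)) →
        (∀ b ∈ setB lam ξ n ∪ setC lam ξ n, u ≠ (b : ℂ)) →
        R1brn lam ξ n u ≠ 0) := by
  have hpi := Real.pi_pos
  have hl0 : (0:ℝ) < lam := by linarith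
  have hfun : R1brn lam ξ n = fun u => ∏ t ∈ Finset.range n, PP lam ξ n t u :=
    funext (R1_eq' lam ξ hl0 n)
  -- bounds
  have hbnd := fun (t : ℕ) (ht : t < n) => base_facts hlam hxi0 hxi1 hn2 ht
  -- key zero-location facts
  have keyA : ∀ t < n, ∀ u : ℂ, 0 < u.re → u.re < Real.pi/2 → SS (cA lam ξ n t) u = 0 →
      u = ((cA lam ξ n t : ℝ) : ℂ) ∧ 0 < cA lam ξ n t ∧ cA lam ξ n t < Real.pi/2 := by
    intro t ht u h1 h2 h0
    exact SS_zero_strip h1 h2 (by linarith [(hbnd t ht).1.1]) (by linarith [(hbnd t ht).1.2]) h0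
  have keyB : ∀ t < n, ∀ u : ℂ, 0 < u.re → u.re < Real.pi/2 → SS (-(cA lam ξ n t)) u = 0 →
      u = ((-(cA lam ξ n t) : ℝ) : ℂ) ∧ 0 < -(cA lam ξ n t) ∧ -(cA lam ξ n t) < Real.pi/2 := by
    intro t ht u h1 h2 h0
    exact SS_zero_strip h1 h2 (by linarith [(hbnd t ht).1.2]) (by linarith [(hbnd t ht).1.1]) h0
  have keyC : ∀ t < n, ∀ u : ℂ, 0 < u.re → u.re < Real.pi/2 → SS (cC lam ξ n t) u = 0 →
      u = ((cC lam ξ n t : ℝ) : ℂ) ∧ 0 < cC lam ξ n t ∧ cC lam ξ n t < Real.pi/2 := by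
    intro t ht u h1 h2 h0
    exact SS_zero_strip h1 h2 (by linarith [(hbnd t ht).2.1]) (by linarith [(hbnd t ht).2.2]) h0
  have keyD : ∀ t < n, ∀ u : ℂ, 0 < u.re → u.re < Real.pi/2 → SS (-(cC lam ξ n t)) u ≠ 0 := by
    intro t ht u h1 h2 h0
    have := SS_zero_strip h1 h2 (by linarith [(hbnd t ht).2.2]) (by linarith [(hbnd t ht).2.1]) h0
    linarith [this.2.1, (hbnd t ht).2.1]
  -- nonvanishing of the A-denominators away from `setA`
  have hAne : ∀ u : ℂ, 0 < u.re → u.re < Real.pi/2 → (∀ a ∈ setA lam ξ n, u ≠ (a : ℂ)) →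
      ∀ t < n, SS (cA lam ξ n t) u ≠ 0 := by
    intro u h1 h2 hA t ht h0
    exact hA _ (cA_mem ht) (keyA t ht u h1 h2 h0).1
  have hBne : ∀ u : ℂ, 0 < u.re → u.re < Real.pi/2 →
      (∀ b ∈ setB lam ξ n ∪ setC lam ξ n, u ≠ (b : ℂ)) →
      ∀ t < n, SS (-(cA lam ξ n t)) u ≠ 0 := by
    intro u h1 h2 hB t ht h0
    exact hB _ (Set.mem_union_left _ (neg_cA_mem ht)) (keyB t ht u h1 h2 h0).1
  have hCne : ∀ u : ℂ, 0 < u.re → u.re < Real.pi/2 →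
      (∀ b ∈ setB lam ξ n ∪ setC lam ξ n, u ≠ (b : ℂ)) →
      ∀ t < n, SS (cC lam ξ n t) u ≠ 0 := by
    intro u h1 h2 hB t ht h0
    exact hB _ (Set.mem_union_right _ (cC_mem ht)) (keyC t ht u h1 h2 h0).1
  refine ⟨?_, ?_, ?_, ?_⟩
  -- Part 1: analyticity away from A
  · intro u h1 h2 hA
    rw [hfun]
    apply Finset.analyticAt_fun_prod
    intro t ht
    rw [Finset.mem_range] at ht
    exact ((SS_analytic _ _).mul (SS_analytic _ _)).div
      ((SS_analytic _ _).mul (SS_analytic _ _))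
      (mul_ne_zero (hAne u h1 h2 hA t ht) (keyD t ht u h1 h2))
  -- Part 2: simple poles at A
  · intro a ha ha0 ha1
    obtain ⟨t0, ht0, rfl⟩ := mem_cA ha
    set a := cA lam ξ n t0 with ha_def
    have hp1 : (0:ℝ) < ((a:ℂ)).re := by simpa using ha0
    have hp2 : ((a:ℂ)).re < Real.pi/2 := by simpa using ha1
    obtain ⟨g, hg, hg0, hgf⟩ := SS_factor a
    have nB : ∀ t < n, SS (-(cA lam ξ n t)) (a:ℂ) ≠ 0 := by
      intro t ht h0
      have h := keyB t ht _ hp1 hp2 h0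
      have : a = -(cA lam ξ n t) := by exact_mod_cast h.1
      exact Set.disjoint_left.mp hAB ha (this ▸ neg_cA_mem ht)
    have nC : ∀ t < n, SS (cC lam ξ n t) (a:ℂ) ≠ 0 := by
      intro t ht h0
      have h := keyC t ht _ hp1 hp2 h0
      have : a = cC lam ξ n t := by exact_mod_cast h.1
      exact Set.disjoint_left.mp hAC ha (this ▸ cC_mem ht)
    have nA' : ∀ t < n, t ≠ t0 → SS (cA lam ξ n t) (a:ℂ) ≠ 0 := by
      intro t ht hne h0
      have h := keyA t ht _ hp1 hp2 h0
      have : a = cA lam ξ n t := by exact_mod_cast h.1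
      exact hne (cA_inj hl0 this.symm)
    have nD : ∀ t < n, SS (-(cC lam ξ n t)) (a:ℂ) ≠ 0 := fun t ht => keyD t ht _ hp1 hp2
    have memrange : ∀ {t : ℕ}, t ∈ (Finset.range n).erase t0 → t < n := by
      intro t ht; exact Finset.mem_range.mp (Finset.mem_of_mem_erase ht)
    have nerange : ∀ {t : ℕ}, t ∈ (Finset.range n).erase t0 → t ≠ t0 :=
      fun ht => Finset.ne_of_mem_erase ht
    refine ⟨fun u => ((∏ t ∈ (Finset.range n).erase t0, PP lam ξ n t u) *
        (SS (-(a)) u * SS (cC lam ξ n t0) u)) / (g u * SS (-(cC lam ξ n t0)) u), ?_, ?_, ?_⟩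
    · apply AnalyticAt.div
      · apply AnalyticAt.mul
        · apply Finset.analyticAt_fun_prod
          intro t ht
          exact ((SS_analytic _ _).mul (SS_analytic _ _)).div
            ((SS_analytic _ _).mul (SS_analytic _ _))
            (mul_ne_zero (nA' t (memrange ht) (nerange ht)) (nD t (memrange ht)))
        · exact (SS_analytic _ _).mul (SS_analytic _ _)
      · exact hg.mul (SS_analytic _ _)
      · exact mul_ne_zero hg0 (nD t0 ht0)
    · apply div_ne_zero
      · apply mul_ne_zero
        · rw [Finset.prod_ne_zero_iff]
          intro t ht
          exact div_ne_zero (mul_ne_zero (nB t (memrange ht)) (nC t (memrange ht)))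
            (mul_ne_zero (nA' t (memrange ht) (nerange ht)) (nD t (memrange ht)))
        · exact mul_ne_zero (nB t0 ht0) (nC t0 ht0)
      · exact mul_ne_zero hg0 (nD t0 ht0)
    · apply Filter.Eventually.of_forall
      intro u
      rw [R1_eq' lam ξ hl0 n u,
        ← Finset.mul_prod_erase (Finset.range n) (fun t => PP lam ξ n t u)
          (Finset.mem_range.mpr ht0)]
      have hPP : PP lam ξ n t0 u = (SS (-(a)) u * SS (cC lam ξ n t0) u) /
          (((u - (a:ℂ)) * g u) * SS (-(cC lam ξ n t0)) u) := by
        rw [PP, hgf u]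
      rw [hPP]
      simp only [div_eq_mul_inv, mul_inv, pow_one]
      ring
  -- Part 3: simple zeros at B ∪ C
  · intro b hb hb0 hb1
    have hp1 : (0:ℝ) < ((b:ℂ)).re := by simpa using hb0
    have hp2 : ((b:ℂ)).re < Real.pi/2 := by simpa using hb1
    rcases hb with hb | hb
    · -- b ∈ setB
      obtain ⟨t0, ht0, rfl⟩ := mem_cB hb
      set b := -(cA lam ξ n t0) with hb_def
      obtain ⟨g, hg, hg0, hgf⟩ := SS_factor b
      have nA : ∀ t < n, SS (cA lam ξ n t) (b:ℂ) ≠ 0 := by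
        intro t ht h0
        have h := keyA t ht _ hp1 hp2 h0
        have : b = cA lam ξ n t := by exact_mod_cast h.1
        exact Set.disjoint_left.mp hAB (this ▸ cA_mem ht) hb
      have nC : ∀ t < n, SS (cC lam ξ n t) (b:ℂ) ≠ 0 := by
        intro t ht h0
        have h := keyC t ht _ hp1 hp2 h0
        have : b = cC lam ξ n t := by exact_mod_cast h.1
        exact Set.disjoint_left.mp hBC hb (this ▸ cC_mem ht)
      have nB' : ∀ t < n, t ≠ t0 → SS (-(cA lam ξ n t)) (b:ℂ) ≠ 0 := by
        intro t ht hne h0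
        have h := keyB t ht _ hp1 hp2 h0
        have h2 : b = -(cA lam ξ n t) := by exact_mod_cast h.1
        have h3 : cA lam ξ n t = cA lam ξ n t0 := by
          rw [hb_def] at h2; linarith [h2]
        exact hne (cA_inj hl0 h3)
      have nD : ∀ t < n, SS (-(cC lam ξ n t)) (b:ℂ) ≠ 0 := fun t ht => keyD t ht _ hp1 hp2
      have memrange : ∀ {t : ℕ}, t ∈ (Finset.range n).erase t0 → t < n := by
        intro t ht; exact Finset.mem_range.mp (Finset.mem_of_mem_erase ht)
      have nerange : ∀ {t : ℕ}, t ∈ (Finset.range n).erase t0 → t ≠ t0 :=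
        fun ht => Finset.ne_of_mem_erase ht
      refine ⟨fun u => ((∏ t ∈ (Finset.range n).erase t0, PP lam ξ n t u) *
          (g u * SS (cC lam ξ n t0) u)) /
          (SS (cA lam ξ n t0) u * SS (-(cC lam ξ n t0)) u), ?_, ?_, ?_⟩
      · apply AnalyticAt.div
        · apply AnalyticAt.mul
          · apply Finset.analyticAt_fun_prod
            intro t ht
            exact ((SS_analytic _ _).mul (SS_analytic _ _)).div
              ((SS_analytic _ _).mul (SS_analytic _ _))
              (mul_ne_zero (nA t (memrange ht)) (nD t (memrange ht)))
          · exact hg.mul (SS_analytic _ _)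
        · exact (SS_analytic _ _).mul (SS_analytic _ _)
        · exact mul_ne_zero (nA t0 ht0) (nD t0 ht0)
      · apply div_ne_zero
        · apply mul_ne_zero
          · rw [Finset.prod_ne_zero_iff]
            intro t ht
            exact div_ne_zero (mul_ne_zero (nB' t (memrange ht) (nerange ht))
              (nC t (memrange ht)))
              (mul_ne_zero (nA t (memrange ht)) (nD t (memrange ht)))
          · exact mul_ne_zero hg0 (nC t0 ht0)
        · exact mul_ne_zero (nA t0 ht0) (nD t0 ht0)
      · apply Filter.Eventually.of_forall
        intro u
        rw [R1_eq' lam ξ hl0 n u,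
          ← Finset.mul_prod_erase (Finset.range n) (fun t => PP lam ξ n t u)
            (Finset.mem_range.mpr ht0)]
        have hPP : PP lam ξ n t0 u = (((u - (b:ℂ)) * g u) * SS (cC lam ξ n t0) u) /
            (SS (cA lam ξ n t0) u * SS (-(cC lam ξ n t0)) u) := by
          rw [PP, ← hgf u, hb_def]
        rw [hPP]
        simp only [div_eq_mul_inv, mul_inv, pow_one]
        ring
    · -- b ∈ setC
      obtain ⟨t0, ht0, rfl⟩ := mem_cC hb
      set b := cC lam ξ n t0 with hb_def
      obtain ⟨g, hg, hg0, hgf⟩ := SS_factor b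
      have nA : ∀ t < n, SS (cA lam ξ n t) (b:ℂ) ≠ 0 := by
        intro t ht h0
        have h := keyA t ht _ hp1 hp2 h0
        have : b = cA lam ξ n t := by exact_mod_cast h.1
        exact Set.disjoint_left.mp hAC (this ▸ cA_mem ht) hb
      have nB : ∀ t < n, SS (-(cA lam ξ n t)) (b:ℂ) ≠ 0 := by
        intro t ht h0
        have h := keyB t ht _ hp1 hp2 h0
        have : b = -(cA lam ξ n t) := by exact_mod_cast h.1
        exact Set.disjoint_left.mp hBC (this ▸ neg_cA_mem ht) hb
      have nC' : ∀ t < n, t ≠ t0 → SS (cC lam ξ n t) (b:ℂ) ≠ 0 := by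
        intro t ht hne h0
        have h := keyC t ht _ hp1 hp2 h0
        have : b = cC lam ξ n t := by exact_mod_cast h.1
        exact hne (cC_inj hl0 this.symm)
      have nD : ∀ t < n, SS (-(cC lam ξ n t)) (b:ℂ) ≠ 0 := fun t ht => keyD t ht _ hp1 hp2
      have memrange : ∀ {t : ℕ}, t ∈ (Finset.range n).erase t0 → t < n := by
        intro t ht; exact Finset.mem_range.mp (Finset.mem_of_mem_erase ht)
      have nerange : ∀ {t : ℕ}, t ∈ (Finset.range n).erase t0 → t ≠ t0 :=
        fun ht => Finset.ne_of_mem_erase ht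
      refine ⟨fun u => ((∏ t ∈ (Finset.range n).erase t0, PP lam ξ n t u) *
          (SS (-(cA lam ξ n t0)) u * g u)) /
          (SS (cA lam ξ n t0) u * SS (-(cC lam ξ n t0)) u), ?_, ?_, ?_⟩
      · apply AnalyticAt.div
        · apply AnalyticAt.mul
          · apply Finset.analyticAt_fun_prod
            intro t ht
            exact ((SS_analytic _ _).mul (SS_analytic _ _)).div
              ((SS_analytic _ _).mul (SS_analytic _ _))
              (mul_ne_zero (nA t (memrange ht)) (nD t (memrange ht)))
          · exact (SS_analytic _ _).mul hg
        · exact (SS_analytic _ _).mul (SS_analytic _ _)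
        · exact mul_ne_zero (nA t0 ht0) (nD t0 ht0)
      · apply div_ne_zero
        · apply mul_ne_zero
          · rw [Finset.prod_ne_zero_iff]
            intro t ht
            exact div_ne_zero (mul_ne_zero (nB t (memrange ht))
              (nC' t (memrange ht) (nerange ht)))
              (mul_ne_zero (nA t (memrange ht)) (nD t (memrange ht)))
          · exact mul_ne_zero (nB t0 ht0) hg0
        · exact mul_ne_zero (nA t0 ht0) (nD t0 ht0)
      · apply Filter.Eventually.of_forall
        intro u
        rw [R1_eq' lam ξ hl0 n u,
          ← Finset.mul_prod_erase (Finset.range n) (fun t => PP lam ξ n t u)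
            (Finset.mem_range.mpr ht0)]
        have hPP : PP lam ξ n t0 u = (SS (-(cA lam ξ n t0)) u * ((u - (b:ℂ)) * g u)) /
            (SS (cA lam ξ n t0) u * SS (-(cC lam ξ n t0)) u) := by
          rw [PP, ← hgf u, hb_def]
        rw [hPP]
        simp only [div_eq_mul_inv, mul_inv, pow_one]
        ring
  -- Part 4: nonvanishing
  · intro u h1 h2 hA hB
    rw [R1_eq' lam ξ hl0 n u]
    rw [Finset.prod_ne_zero_iff]
    intro t ht
    rw [Finset.mem_range] at ht
    exact div_ne_zero
      (mul_ne_zero (hBne u h1 h2 hB t ht) (hCne u h1 h2 hB t ht))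
      (mul_ne_zero (hAne u h1 h2 hA t ht) (keyD t ht u h1 h2))
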